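/- Let G be a finite simple graph and f : V(G) → ℝ with f(v) ≤ 1/(d(v)+1/2) for all v. Suppose u and w are non-adjacent vertices with d(u) ≤ d(x) for all x ∈ N(u), d(w) ≤ d(x) for all x ∈ N(w), and f(u) + f(w) + ∑_{x∈N(u)∪N(w)} f(x) > 2. Then N(u) ∩ N(w) = ∅. -/

import Mathlib

/-- A set of vertices is independent if its vertices are pairwise non-adjacent. -/
def SimpleGraph.IsIndepSet' {V : Type*} (G : SimpleGraph V) (s : Set V) : Prop :=
  s.Pairwise (fun u v => ¬ G.Adj u v)

open scoped Classical

lemma stmt_10_key {V : Type*} [Fintype V] [DecidableEq V] (G : SimpleGraph V)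
    [DecidableRel G.Adj] (f : V → ℝ)
    (hf : ∀ v, f v ≤ 1 / (G.degree v + 1 / 2)) (u w : V)
    (hu : ∀ x ∈ G.neighborFinset u, G.degree u ≤ G.degree x)
    (hw : ∀ x ∈ G.neighborFinset w, G.degree w ≤ G.degree x)
    (hdle : G.degree u ≤ G.degree w)
    (v : V) (hvu : v ∈ G.neighborFinset u) (hvw : v ∈ G.neighborFinset w) :
    f u + f w + ∑ x ∈ G.neighborFinset u ∪ G.neighborFinset w, f x ≤ 2 := by
  have ha1 : 1 ≤ G.degree u := by
    have h0 : 0 < (G.neighborFinset u).card := Finset.card_pos.mpr ⟨v, hvu⟩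
    rwa [G.card_neighborFinset_eq_degree] at h0
  have hA1 : (1 : ℝ) ≤ (G.degree u : ℝ) := by exact_mod_cast ha1
  have hAB : (G.degree u : ℝ) ≤ (G.degree w : ℝ) := by exact_mod_cast hdle
  have hApos : (0 : ℝ) < (G.degree u : ℝ) + 1 / 2 := by linarith
  have hBpos : (0 : ℝ) < (G.degree w : ℝ) + 1 / 2 := by linarith
  -- split the union
  have hsplit : G.neighborFinset u ∪ G.neighborFinset w
      = G.neighborFinset w ∪ (G.neighborFinset u \ G.neighborFinset w) := by
    rw [Finset.union_sdiff_self_eq_union, Finset.union_comm]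
  rw [hsplit, Finset.sum_union Finset.disjoint_sdiff]
  -- each term bounds
  have hfx_w : ∀ x ∈ G.neighborFinset w, f x ≤ 1 / ((G.degree w : ℝ) + 1 / 2) := by
    intro x hx
    refine (hf x).trans ?_
    apply one_div_le_one_div_of_le hBpos
    have h1 : (G.degree w : ℝ) ≤ (G.degree x : ℝ) := by exact_mod_cast hw x hx
    linarith
  have hfx_u : ∀ x ∈ G.neighborFinset u \ G.neighborFinset w,
      f x ≤ 1 / ((G.degree u : ℝ) + 1 / 2) := by
    intro x hx
    refine (hf x).trans ?_
    apply one_div_le_one_div_of_le hApos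
    have h1 : (G.degree u : ℝ) ≤ (G.degree x : ℝ) := by
      exact_mod_cast hu x (Finset.mem_sdiff.mp hx).1
    linarith
  -- sum bounds
  have s1 : ∑ x ∈ G.neighborFinset w, f x
      ≤ (G.degree w : ℝ) * (1 / ((G.degree w : ℝ) + 1 / 2)) := by
    have h := Finset.sum_le_card_nsmul _ _ _ hfx_w
    rw [nsmul_eq_mul, G.card_neighborFinset_eq_degree] at h
    exact h
  have hcard : ((G.neighborFinset u \ G.neighborFinset w).card : ℝ)
      ≤ (G.degree u : ℝ) - 1 := by
    have hsub : G.neighborFinset u \ G.neighborFinset w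
        ⊆ (G.neighborFinset u).erase v := by
      intro x hx
      rcases Finset.mem_sdiff.mp hx with ⟨h1, h2⟩
      refine Finset.mem_erase.mpr ⟨?_, h1⟩
      rintro rfl; exact h2 hvw
    have h1 : (G.neighborFinset u \ G.neighborFinset w).card
        ≤ ((G.neighborFinset u).erase v).card := Finset.card_le_card hsub
    have h2 : ((G.neighborFinset u).erase v).card = G.degree u - 1 := by
      rw [Finset.card_erase_of_mem hvu, G.card_neighborFinset_eq_degree]
    have h3 : ((G.degree u - 1 : ℕ) : ℝ) = (G.degree u : ℝ) - 1 := by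
      rw [Nat.cast_sub ha1]; norm_num
    calc ((G.neighborFinset u \ G.neighborFinset w).card : ℝ)
        ≤ ((G.degree u - 1 : ℕ) : ℝ) := by exact_mod_cast h2 ▸ h1
      _ = (G.degree u : ℝ) - 1 := h3
  have s2 : ∑ x ∈ G.neighborFinset u \ G.neighborFinset w, f x
      ≤ ((G.degree u : ℝ) - 1) * (1 / ((G.degree u : ℝ) + 1 / 2)) := by
    have h := Finset.sum_le_card_nsmul _ _ _ hfx_u
    rw [nsmul_eq_mul] at h
    refine h.trans ?_
    exact mul_le_mul_of_nonneg_right hcard (by positivity)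
  have hfu : f u ≤ 1 / ((G.degree u : ℝ) + 1 / 2) := hf u
  have hfw : f w ≤ 1 / ((G.degree w : ℝ) + 1 / 2) := hf w
  -- algebraic identities
  have e1 : ((G.degree u : ℝ) - 1) * (1 / ((G.degree u : ℝ) + 1 / 2))
      = 1 - (3 / 2) * (1 / ((G.degree u : ℝ) + 1 / 2)) := by
    field_simp
    ring
  have e2 : (G.degree w : ℝ) * (1 / ((G.degree w : ℝ) + 1 / 2))
      = 1 - (1 / 2) * (1 / ((G.degree w : ℝ) + 1 / 2)) := by
    field_simp
    ring
  have e3 : 1 / ((G.degree w : ℝ) + 1 / 2) ≤ 1 / ((G.degree u : ℝ) + 1 / 2) :=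
    one_div_le_one_div_of_le hApos (by linarith)
  linarith

theorem stmt_10 {V : Type*} [Fintype V] [DecidableEq V] (G : SimpleGraph V)
    [DecidableRel G.Adj] (f : V → ℝ)
    (hf : ∀ v, f v ≤ 1 / (G.degree v + 1 / 2)) (u w : V) (huw : u ≠ w)
    (hadj : ¬ G.Adj u w)
    (hu : ∀ x ∈ G.neighborFinset u, G.degree u ≤ G.degree x)
    (hw : ∀ x ∈ G.neighborFinset w, G.degree w ≤ G.degree x)
    (hsum : 2 < f u + f w + ∑ x ∈ G.neighborFinset u ∪ G.neighborFinset w, f x) :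
    G.neighborFinset u ∩ G.neighborFinset w = ∅ := by
  by_contra h
  obtain ⟨v, hv⟩ := Finset.nonempty_iff_ne_empty.mpr h
  rcases Finset.mem_inter.mp hv with ⟨hvu, hvw⟩
  rcases le_total (G.degree u) (G.degree w) with hle | hle
  · have := stmt_10_key G f hf u w hu hw hle v hvu hvw
    linarith
  · have := stmt_10_key G f hf w u hw hu hle v hvw hvu
    rw [Finset.union_comm] at this
    linarith
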